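/- Conversely, if f : ℝ → ℝ and L : ℝ are such that for every nonzero infinitesimal hyperreal dx the quotient (f*(x₀ + dx) - f*(x₀))/dx is infinitely close to L, then f is differentiable at x₀ with derivative L. -/

import Mathlib

open Hyperreal Filter

/-- The natural hyperreal extension of a real function. -/
noncomputable def hyperExt (f : ℝ → ℝ) (x : ℝ*) : ℝ* := x.map f

/-- infinitesimal slope condition implies derivative. -/
theorem slope_infinitely_close_hasDerivAt (f : ℝ → ℝ) (x₀ L : ℝ)
    (h : ∀ dx : ℝ*, dx ≠ 0 → Infinitesimal dx →
      Infinitesimal ((hyperExt f ((x₀ : ℝ*) + dx) - hyperExt f (x₀ : ℝ*)) / dx - (L : ℝ*))) :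
    HasDerivAt f L x₀ := by
  rw [hasDerivAt_iff_tendsto_slope]
  rw [Metric.tendsto_nhdsWithin_nhds]
  by_contra hc
  push_neg at hc
  obtain ⟨e, he, hδ⟩ := hc
  choose u hu1 hu2 hu3 using fun n : ℕ => hδ (1 / (n + 1)) (by positivity)
  set dx : ℝ* := ofSeq (fun n => u n - x₀) with hdx
  have hune : ∀ n, u n ≠ x₀ := fun n => hu1 n
  have hne : dx ≠ 0 := by
    intro h0
    have : ∀ᶠ n in hyperfilter ℕ, u n - x₀ = (0 : ℝ) := by
      have h0' : ((fun n => u n - x₀ : ℕ → ℝ) : Germ (hyperfilter ℕ : Filter ℕ) ℝ) = ((fun _ => (0:ℝ) : ℕ → ℝ) : Germ (hyperfilter ℕ : Filter ℕ) ℝ) := h0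
      exact Germ.coe_eq.mp h0'
    rcases this.exists with ⟨n, hn⟩
    exact hune n (by linarith [sub_eq_zero.mp hn])
  have htend : Filter.Tendsto (fun n => u n - x₀) atTop (nhds 0) := by
    rw [tendsto_iff_dist_tendsto_zero]
    apply squeeze_zero (fun n => dist_nonneg) (fun n => ?_)
      tendsto_one_div_add_atTop_nhds_zero_nat
    simpa [Real.dist_eq] using (hu2 n).le
  have hinf : Infinitesimal dx := infinitesimal_of_tendsto_zero htend
  have key := h dx hne hinf
  have heq : (hyperExt f ((x₀ : ℝ*) + dx) - hyperExt f (x₀ : ℝ*)) / dx - (L : ℝ*) =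
      ofSeq (fun n => (f (u n) - f x₀) / (u n - x₀) - L) := by
    have hx0 : (x₀ : ℝ*) = ofSeq (fun _ => x₀) := rfl
    have h1 : (x₀ : ℝ*) + dx = ofSeq (fun n => u n) := by
      rw [hdx, hx0]; show ((fun n => x₀ + (u n - x₀) : ℕ → ℝ) : Germ (hyperfilter ℕ : Filter ℕ) ℝ) = ((fun n => u n : ℕ → ℝ) : Germ (hyperfilter ℕ : Filter ℕ) ℝ)
      congr 1; funext n; show x₀ + (u n - x₀) = u n; ring
    rw [h1, hyperExt, hyperExt, ofSeq]
    rfl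
  rw [heq] at key
  obtain ⟨hlo, hhi⟩ := infinitesimal_def.mp key e he
  have hhi' : ∀ᶠ n in hyperfilter ℕ, (f (u n) - f x₀) / (u n - x₀) - L < e :=
    ofSeq_lt_ofSeq.mp hhi
  have hlo' : ∀ᶠ n in hyperfilter ℕ, -e < (f (u n) - f x₀) / (u n - x₀) - L :=
    ofSeq_lt_ofSeq.mp hlo
  rcases (hhi'.and hlo').exists with ⟨n, hn1, hn2⟩
  have := hu3 n
  rw [slope_def_field, Real.dist_eq] at this
  have habs : |(f (u n) - f x₀) / (u n - x₀) - L| < e := abs_lt.mpr ⟨hn2, hn1⟩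
  exact absurd habs (not_lt.mpr this)
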